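/- arXiv:1811.03355 — 9 statements merged into one kernel-verified Lean document; each statement's English description precedes it below -/
import Mathlib

section
/- In a finitary argumentation framework, the defense function is upward ω-continuous: for any directed family D of subsets of A, d(⋃_{X ∈ D} X) = ⋃_{X ∈ D} d(X). -/
variable {A : Type*}

/-- The defense function of an argumentation framework with attack relation `r`. -/
def defense (r : A → A → Prop) (X : Set A) : Set A :=
  {x | ∀ y, r y x → ∃ z ∈ X, r z y}

/-- The neutrality function. -/
def neut (r : A → A → Prop) (X : Set A) : Set A :=
  {x | ¬ ∃ y ∈ X, r y x}

/-- A framework is finitary if every argument has finitely many attackers. -/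
def Finitary (r : A → A → Prop) : Prop := ∀ x, {y | r y x}.Finite

lemma exists_ub {A : Type*} (D : Set (Set A)) (hne : D.Nonempty)
    (hdir : ∀ X ∈ D, ∀ Y ∈ D, ∃ Z ∈ D, X ⊆ Z ∧ Y ⊆ Z)
    {S : Set (Set A)} (hS : S.Finite) (hSD : S ⊆ D) :
    ∃ Z ∈ D, ∀ T ∈ S, T ⊆ Z := by
  revert hSD
  refine Set.Finite.induction_on S hS ?_ ?_
  · intro _
    obtain ⟨Z, hZ⟩ := hne
    exact ⟨Z, hZ, by simp⟩
  · intro T S _ _ ih hSD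
    obtain ⟨Z, hZ, hub⟩ := ih (fun x hx => hSD (Set.mem_insert_of_mem _ hx))
    obtain ⟨W, hW, hTW, hZW⟩ := hdir T (hSD (Set.mem_insert _ _)) Z hZ
    refine ⟨W, hW, ?_⟩
    rintro U (rfl | hU)
    · exact hTW
    · exact (hub U hU).trans hZW

theorem defense_upward_continuous (r : A → A → Prop) (hfin : Finitary r)
    (D : Set (Set A)) (hne : D.Nonempty)
    (hdir : ∀ X ∈ D, ∀ Y ∈ D, ∃ Z ∈ D, X ⊆ Z ∧ Y ⊆ Z) :
    defense r (⋃ X ∈ D, X) = ⋃ X ∈ D, defense r X := by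
  ext x
  simp only [Set.mem_iUnion]
  constructor
  · intro hx
    have hch : ∀ y ∈ {y | r y x}, ∃ X ∈ D, ∃ z ∈ X, r z y := by
      intro y hy
      obtain ⟨z, hz, hzy⟩ := hx y hy
      simp only [Set.mem_iUnion] at hz
      obtain ⟨X, hX, hzX⟩ := hz
      exact ⟨X, hX, z, hzX, hzy⟩
    choose f hfD hf using hch
    have : Finite {y // y ∈ {y | r y x}} := (hfin x).to_subtype
    have hSfin : (Set.range (fun p : {y // y ∈ {y | r y x}} => f p.1 p.2)).Finite :=
      Set.finite_range _
    obtain ⟨Z, hZ, hub⟩ := exists_ub D hne hdir hSfin (by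
      rintro _ ⟨⟨y, hy⟩, rfl⟩; exact hfD y hy)
    refine ⟨Z, hZ, fun y hy => ?_⟩
    obtain ⟨z, hzf, hzy⟩ := hf y hy
    exact ⟨z, hub _ ⟨⟨y, hy⟩, rfl⟩ hzf, hzy⟩
  · rintro ⟨X, hX, hx⟩ y hy
    obtain ⟨z, hz, hzy⟩ := hx y hy
    exact ⟨z, Set.mem_iUnion.2 ⟨X, Set.mem_iUnion.2 ⟨hX, hz⟩⟩, hzy⟩
end

section
/- In a finitary argumentation framework, the defense function is downward continuous on directed intersections: for any downward directed family D of subsets of A, d(⋂_{X ∈ D} X) = ⋂_{X ∈ D} d(X). -/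
variable {A : Type*}

theorem defense_downward_continuous (r : A → A → Prop) (hfin : Finitary r)
    (D : Set (Set A)) (hne : D.Nonempty)
    (hdir : ∀ X ∈ D, ∀ Y ∈ D, ∃ Z ∈ D, Z ⊆ X ∧ Z ⊆ Y) :
    defense r (⋂ X ∈ D, X) = ⋂ X ∈ D, defense r X := by
  have key : ∀ S : Set A, S.Finite → (∀ z ∈ S, ∃ X ∈ D, z ∉ X) →
      ∃ Z ∈ D, ∀ z ∈ S, z ∉ Z := by
    intro S hS
    refine Set.Finite.induction_on S hS ?_ ?_
    · intro _
      obtain ⟨X, hX⟩ := hne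
      exact ⟨X, hX, by simp⟩
    · intro a s _ _ ih h
      obtain ⟨Z, hZ, hZs⟩ := ih (fun z hz => h z (Set.mem_insert_of_mem a hz))
      obtain ⟨X, hX, haX⟩ := h a (Set.mem_insert a s)
      obtain ⟨W, hW, hWZ, hWX⟩ := hdir Z hZ X hX
      refine ⟨W, hW, ?_⟩
      intro z hz hzW
      rcases hz with rfl | hz
      · exact haX (hWX hzW)
      · exact hZs z hz (hWZ hzW)
  ext x
  simp only [defense, Set.mem_setOf_eq, Set.mem_iInter]
  constructor
  · intro h X hX y hy
    obtain ⟨z, hz, hzy⟩ := h y hy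
    exact ⟨z, hz X hX, hzy⟩
  · intro h y hy
    by_contra hc
    push_neg at hc
    have : ∀ z ∈ {z | r z y} , ∃ X ∈ D, z ∉ X := by
      intro z hz
      by_contra hc2
      push_neg at hc2
      exact hc z (fun X hX => hc2 X hX) hz
    obtain ⟨Z, hZ, hZn⟩ := key _ (hfin y) this
    obtain ⟨z, hz, hzy⟩ := h Z hZ y hy
    exact hZn z hzy hz
end

section
/- (Dung's fundamental lemma, iterated form) Let Δ be a finitary argumentation framework and X ⊆ A be admissible. Then for every natural number k, X ⊆ d^k(X) ⊆ n(d^k(X)) ⊆ n(X); in particular, each iterate d^k(X) is conflict-free. -/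
variable {A : Type*}

lemma defense_mono (r : A → A → Prop) {X Y : Set A} (h : X ⊆ Y) :
    defense r X ⊆ defense r Y := fun x hx y hy =>
  (hx y hy).imp fun z ⟨hz, hr⟩ => ⟨h hz, hr⟩

lemma neut_anti (r : A → A → Prop) {X Y : Set A} (h : X ⊆ Y) :
    neut r Y ⊆ neut r X := fun x hx ⟨y, hy, hr⟩ => hx ⟨y, h hy, hr⟩

lemma defense_cf (r : A → A → Prop) {Y : Set A} (hcf : Y ⊆ neut r Y)
    (hdef : Y ⊆ defense r Y) : defense r Y ⊆ neut r (defense r Y) := by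
  rintro b hb ⟨a, ha, hab⟩
  obtain ⟨z, hz, hza⟩ := hb a hab
  obtain ⟨w, hw, hwz⟩ := ha z hza
  exact hcf hz ⟨w, hw, hwz⟩

theorem fundamental_lemma_iterated (r : A → A → Prop) (hfin : Finitary r)
    (X : Set A) (hcf : X ⊆ neut r X) (hdef : X ⊆ defense r X) (k : ℕ) :
    X ⊆ (defense r)^[k] X ∧
      (defense r)^[k] X ⊆ neut r ((defense r)^[k] X) ∧
      neut r ((defense r)^[k] X) ⊆ neut r X := by
  suffices h : X ⊆ (defense r)^[k] X ∧
      (defense r)^[k] X ⊆ neut r ((defense r)^[k] X) ∧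
      (defense r)^[k] X ⊆ defense r ((defense r)^[k] X) by
    exact ⟨h.1, h.2.1, neut_anti r h.1⟩
  induction k with
  | zero => exact ⟨subset_rfl, hcf, hdef⟩
  | succ n ih =>
    obtain ⟨h1, h2, h3⟩ := ih
    rw [Function.iterate_succ_apply']
    refine ⟨h1.trans h3, defense_cf r h2 h3, defense_mono r h3⟩
end

section
/- Let Δ be a finitary argumentation framework and X ⊆ A admissible. Then ⋃_{k < ω} d^k(X) is the least fixpoint of the defense function d containing X. -/
variable {A : Type*}

lemma iterate_mono (r : A → A → Prop) {X : Set A} (hdef : X ⊆ defense r X) :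
    ∀ {k l : ℕ}, k ≤ l → (defense r)^[k] X ⊆ (defense r)^[l] X := by
  have step : ∀ k, (defense r)^[k] X ⊆ (defense r)^[k+1] X := by
    intro k
    induction k with
    | zero => simpa using hdef
    | succ n ih =>
      rw [Function.iterate_succ_apply', Function.iterate_succ_apply']
      exact defense_mono r ih
  intro k l hkl
  induction l, hkl using Nat.le_induction with
  | base => exact subset_rfl
  | succ n _ ih => exact ih.trans (step n)

theorem iUnion_iterates_lfp (r : A → A → Prop) (hfin : Finitary r)
    (X : Set A) (hcf : X ⊆ neut r X) (hdef : X ⊆ defense r X) :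
    defense r (⋃ k, (defense r)^[k] X) = ⋃ k, (defense r)^[k] X ∧
      X ⊆ ⋃ k, (defense r)^[k] X ∧
      ∀ Z, defense r Z = Z → X ⊆ Z → (⋃ k, (defense r)^[k] X) ⊆ Z := by
  set Y := ⋃ k, (defense r)^[k] X with hY
  refine ⟨?_, ?_, ?_⟩
  · apply Set.Subset.antisymm
    · -- defense Y ⊆ Y, using finitariness
      intro x hx
      classical
      have hx' : ∀ y, r y x → ∃ k, ∃ z ∈ (defense r)^[k] X, r z y := by
        intro y hy
        obtain ⟨z, hz, hrz⟩ := hx y hy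
        obtain ⟨S, ⟨k, rfl⟩, hzS⟩ := hz
        exact ⟨k, z, hzS, hrz⟩
      let F := (hfin x).toFinset
      let g : A → ℕ := fun y => if h : ∃ k, ∃ z ∈ (defense r)^[k] X, r z y then h.choose else 0
      let K := F.sup g
      refine Set.mem_iUnion.2 ⟨K + 1, ?_⟩
      rw [Function.iterate_succ_apply']
      intro y hy
      have hyF : y ∈ F := (hfin x).mem_toFinset.2 hy
      have hex := hx' y hy
      obtain ⟨z, hz, hrz⟩ := hex.choose_spec
      have hgK : g y ≤ K := Finset.le_sup hyF
      have : z ∈ (defense r)^[g y] X := by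
        simpa [g, hex] using hz
      exact ⟨z, iterate_mono r hdef hgK this, hrz⟩
    · -- Y ⊆ defense Y
      intro x hx
      obtain ⟨S, ⟨k, rfl⟩, hxS⟩ := hx
      have : x ∈ (defense r)^[k+1] X := iterate_mono r hdef (Nat.le_succ k) hxS
      rw [Function.iterate_succ_apply'] at this
      exact defense_mono r (Set.subset_iUnion (fun k => (defense r)^[k] X) k) this
  · exact Set.subset_iUnion (fun k => (defense r)^[k] X) 0
  · intro Z hZ hXZ
    refine Set.iUnion_subset fun k => ?_
    induction k with
    | zero => simpa using hXZ
    | succ n ih =>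
      rw [Function.iterate_succ_apply']
      exact (defense_mono r ih).trans hZ.subset
end

section
/- Let Δ be a finitary argumentation framework and X ⊆ A admissible. Then ⋂_{k < ω} d^k(n(X)) is the greatest fixpoint of d contained in n(X). -/
variable {A : Type*}

theorem iInter_iterates_gfp (r : A → A → Prop) (hfin : Finitary r)
    (X : Set A) (hcf : X ⊆ neut r X) (hdef : X ⊆ defense r X) :
    defense r (⋂ k, (defense r)^[k] (neut r X)) = ⋂ k, (defense r)^[k] (neut r X) ∧
      (⋂ k, (defense r)^[k] (neut r X)) ⊆ neut r X ∧
      ∀ Z, defense r Z = Z → Z ⊆ neut r X → Z ⊆ ⋂ k, (defense r)^[k] (neut r X) := by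
  have mono : ∀ {Y Z : Set A}, Y ⊆ Z → defense r Y ⊆ defense r Z := by
    intro Y Z h x hx y hy
    obtain ⟨z, hz, hzy⟩ := hx y hy
    exact ⟨z, h hz, hzy⟩
  set N := neut r X with hNdef
  have hdN : defense r N ⊆ N := by
    intro x hx
    rintro ⟨y, hyX, hyx⟩
    obtain ⟨z, hzN, hzy⟩ := hx y hyx
    exact hzN (hdef hyX z hzy)
  have iter_mono : ∀ (k : ℕ) {Y Z : Set A}, Y ⊆ Z → (defense r)^[k] Y ⊆ (defense r)^[k] Z := by
    intro k
    induction k with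
    | zero => intro Y Z h; simpa using h
    | succ k ih =>
      intro Y Z h
      rw [Function.iterate_succ_apply, Function.iterate_succ_apply]
      exact ih (mono h)
  have anti : ∀ k, (defense r)^[k+1] N ⊆ (defense r)^[k] N := by
    intro k
    rw [Function.iterate_succ_apply]
    exact iter_mono k hdN
  have anti' : ∀ k m, k ≤ m → (defense r)^[m] N ⊆ (defense r)^[k] N := by
    intro k m hkm
    induction hkm with
    | refl => exact le_refl _
    | step h ih => exact fun x hx => ih (anti _ hx)
  set W := ⋂ k, (defense r)^[k] N with hW
  have hWsub : ∀ k, W ⊆ (defense r)^[k] N := fun k => Set.iInter_subset _ k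
  have hdWsub : defense r W ⊆ W := by
    intro x hx
    refine Set.mem_iInter.2 fun k => ?_
    have h1 : x ∈ defense r ((defense r)^[k] N) := mono (hWsub k) hx
    rw [← Function.iterate_succ_apply' (defense r) k N] at h1
    exact anti k h1
  have hWd : W ⊆ defense r W := by
    intro x hx y hyx
    -- attackers of y
    have hfinS : {z | r z y}.Finite := hfin y
    haveI : Finite ↥{z | r z y} := hfinS.to_subtype
    have hchoice : ∀ k : ℕ, ∃ z : ↥{z | r z y}, (z : A) ∈ (defense r)^[k] N := by
      intro k
      have hx' : x ∈ (defense r)^[k+1] N := hWsub (k+1) hx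
      rw [Function.iterate_succ_apply'] at hx'
      obtain ⟨z, hz, hzy⟩ := hx' y hyx
      exact ⟨⟨z, hzy⟩, hz⟩
    choose f hf using hchoice
    obtain ⟨z, hzinf⟩ := Finite.exists_infinite_fiber f
    refine ⟨(z : A), ?_, z.2⟩
    refine Set.mem_iInter.2 fun k => ?_
    obtain ⟨m, hm, hkm⟩ := (Set.infinite_coe_iff.mp hzinf).exists_gt k
    have : f m = z := hm
    exact anti' k m hkm.le (this ▸ hf m)
  refine ⟨Set.Subset.antisymm hdWsub hWd, ?_, ?_⟩
  · have := hWsub 0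
    simpa using this
  · intro Z hZfix hZN
    have : ∀ k, Z ⊆ (defense r)^[k] N := by
      intro k
      induction k with
      | zero => simpa using hZN
      | succ k ih =>
        rw [Function.iterate_succ_apply', ← hZfix]
        exact mono ih
    exact Set.subset_iInter this
end

section
/- Let Δ be a finitary argumentation framework and X ⊆ A admissible. Then ⋃_{k < ω} d^k(X) is the smallest complete extension of Δ that includes X. -/
variable {A : Type*}

lemma defense_admissible (r : A → A → Prop) {X : Set A} (hcf : X ⊆ neut r X)
    (hdef : X ⊆ defense r X) :
    defense r X ⊆ neut r (defense r X) ∧ defense r X ⊆ defense r (defense r X) := by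
  constructor
  · intro a ha ⟨b, hb, hba⟩
    obtain ⟨z, hz, hzb⟩ := ha b hba
    obtain ⟨w, hw, hwz⟩ := hb z hzb
    exact hcf hz ⟨w, hw, hwz⟩
  · exact defense_mono r hdef

lemma iter_adm (r : A → A → Prop) {X : Set A} (hcf : X ⊆ neut r X)
    (hdef : X ⊆ defense r X) (k : ℕ) :
    (defense r)^[k] X ⊆ neut r ((defense r)^[k] X) ∧
    (defense r)^[k] X ⊆ defense r ((defense r)^[k] X) := by
  induction k with
  | zero => exact ⟨hcf, hdef⟩
  | succ n ih =>
    rw [Function.iterate_succ_apply']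
    exact defense_admissible r ih.1 ih.2

lemma iter_mono (r : A → A → Prop) {X : Set A} (hdef : X ⊆ defense r X) :
    Monotone fun k => (defense r)^[k] X := by
  apply monotone_nat_of_le_succ
  intro k
  induction k with
  | zero => exact hdef
  | succ n ih =>
    rw [Function.iterate_succ_apply' (defense r) (n+1),
      Function.iterate_succ_apply' (defense r) n]
    rw [Function.iterate_succ_apply'] at ih
    exact defense_mono r ih

theorem iUnion_iterates_smallest_complete (r : A → A → Prop) (hfin : Finitary r)
    (X : Set A) (hcf : X ⊆ neut r X) (hdef : X ⊆ defense r X) :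
    (⋃ k, (defense r)^[k] X) ⊆ neut r (⋃ k, (defense r)^[k] X) ∧
      defense r (⋃ k, (defense r)^[k] X) = ⋃ k, (defense r)^[k] X ∧
      X ⊆ ⋃ k, (defense r)^[k] X ∧
      ∀ E, E ⊆ neut r E → defense r E = E → X ⊆ E →
        (⋃ k, (defense r)^[k] X) ⊆ E := by
  have hmono := iter_mono r hdef
  refine ⟨?_, ?_, ?_, ?_⟩
  · intro a ha ⟨b, hb, hba⟩
    obtain ⟨j, hj⟩ := Set.mem_iUnion.1 ha
    obtain ⟨k, hk⟩ := Set.mem_iUnion.1 hb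
    have hj' : a ∈ (defense r)^[max j k] X := hmono (le_max_left j k) hj
    have hk' : b ∈ (defense r)^[max j k] X := hmono (le_max_right j k) hk
    exact (iter_adm r hcf hdef (max j k)).1 hj' ⟨b, hk', hba⟩
  · apply Set.Subset.antisymm
    · -- finitary direction
      intro x hx
      -- attackers of x are finite; each is attacked by some iterate
      have hfinx := hfin x
      -- choose for each attacker y a level k y
      have hchoice : ∀ y ∈ {y | r y x}, ∃ k : ℕ, ∃ z ∈ (defense r)^[k] X, r z y := by
        intro y hy
        obtain ⟨z, hz, hzy⟩ := hx y hy
        obtain ⟨k, hk⟩ := Set.mem_iUnion.1 hz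
        exact ⟨k, z, hk, hzy⟩
      classical
      choose! f hf using hchoice
      obtain ⟨N, hN⟩ : ∃ N, ∀ y ∈ {y | r y x}, f y ≤ N := by
        rcases Set.eq_empty_or_nonempty {y | r y x} with he | hne
        · exact ⟨0, by simp [he]⟩
        · obtain ⟨N, hN⟩ := (hfinx.image f).bddAbove
          exact ⟨N, fun y hy => hN (Set.mem_image_of_mem f hy)⟩
      apply Set.mem_iUnion.2 ⟨N + 1, ?_⟩
      rw [Function.iterate_succ_apply']
      intro y hy
      obtain ⟨z, hz, hzy⟩ := hf y hy
      exact ⟨z, hmono (hN y hy) hz, hzy⟩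
    · intro x hx
      obtain ⟨k, hk⟩ := Set.mem_iUnion.1 hx
      have := (iter_adm r hcf hdef k).2 hk
      exact defense_mono r (Set.subset_iUnion (fun k => (defense r)^[k] X) k) this
  · exact Set.subset_iUnion (fun k => (defense r)^[k] X) 0
  · intro E hEcf hEfix hXE
    intro x hx
    obtain ⟨k, hk⟩ := Set.mem_iUnion.1 hx
    have : ∀ k, (defense r)^[k] X ⊆ E := by
      intro k
      induction k with
      | zero => exact hXE
      | succ n ih =>
        rw [Function.iterate_succ_apply']
        exact fun a ha => hEfix ▸ defense_mono r ih ha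
    exact this k hk
end

section
/- The strength ordering on graded defense functions is characterized by the parameters: d_{m,n}(X) ⊆ d_{s,t}(X) for all X ⊆ A and all argumentation frameworks, if and only if m ≤ s and t ≤ n. -/
variable {A : Type*}

/-- Graded neutrality: arguments with fewer than `ℓ` attackers in `X`. -/
def grNeut (r : A → A → Prop) (ℓ : ℕ) (X : Set A) : Set A :=
  {x | {y ∈ X | r y x}.encard < (ℓ : ℕ∞)}

/-- Graded defense: arguments with fewer than `m` attackers that have
fewer than `n` counter-attackers in `X`. -/
def grDef (r : A → A → Prop) (m n : ℕ) (X : Set A) : Set A :=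
  {x | {y | r y x ∧ {z ∈ X | r z y}.encard < (n : ℕ∞)}.encard < (m : ℕ∞)}

private lemma enc_range (k : ℕ) {α : Type*} (f : Fin k → α) (hf : Function.Injective f) :
    (Set.range f).encard = k := by
  rw [← Set.image_univ, hf.encard_image, Set.encard_univ]
  simp

/-- attack relation for witness 2 -/
private def r2 (s n : ℕ) : Option (Fin s ⊕ Fin s × Fin n) → Option (Fin s ⊕ Fin s × Fin n) → Prop
  | some (Sum.inl _), none => True
  | some (Sum.inr p), some (Sum.inl i) => p.1 = i
  | _, _ => False

theorem grDef_strength_order_iff (m n s t : ℕ)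
    (hm : 0 < m) (hn : 0 < n) (hs : 0 < s) (ht : 0 < t) :
    (∀ (A : Type) (r : A → A → Prop) (X : Set A), grDef r m n X ⊆ grDef r s t X) ↔
      (m ≤ s ∧ t ≤ n) := by
  constructor
  · intro h
    constructor
    · -- m ≤ s via framework 1
      by_contra hms
      push_neg at hms  -- s < m
      have key := h (Option (Fin s)) (fun y x => x = none ∧ y.isSome) ∅
      have hset : ∀ ℓ : ℕ, 0 < ℓ →
          {y : Option (Fin s) | ((none : Option (Fin s)) = none ∧ y.isSome = true) ∧
            ({z | z ∈ (∅ : Set (Option (Fin s))) ∧ (y = none ∧ z.isSome = true)}).encard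
              < (ℓ : ℕ∞)} = Set.range some := by
        intro ℓ hℓ
        ext y
        constructor
        · rintro ⟨⟨-, hy⟩, -⟩
          exact ⟨y.get hy, by simp⟩
        · rintro ⟨i, rfl⟩
          refine ⟨⟨rfl, rfl⟩, ?_⟩
          have he : {z | z ∈ (∅ : Set (Option (Fin s))) ∧
              ((some i : Option (Fin s)) = none ∧ z.isSome = true)} = ∅ := by
            ext z; simp
          rw [he, Set.encard_empty]
          exact_mod_cast hℓ
      have h1 : (none : Option (Fin s)) ∈ grDef (fun y x => x = none ∧ y.isSome) m n ∅ := by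
        show ({y : Option (Fin s) | ((none : Option (Fin s)) = none ∧ y.isSome = true) ∧
            ({z | z ∈ (∅ : Set (Option (Fin s))) ∧ (y = none ∧ z.isSome = true)}).encard
              < (n : ℕ∞)}).encard < (m : ℕ∞)
        rw [hset n hn, enc_range s some (Option.some_injective _)]
        exact_mod_cast hms
      have h2 : ({y : Option (Fin s) | ((none : Option (Fin s)) = none ∧ y.isSome = true) ∧
            ({z | z ∈ (∅ : Set (Option (Fin s))) ∧ (y = none ∧ z.isSome = true)}).encard
              < (t : ℕ∞)}).encard < (s : ℕ∞) := key h1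
      rw [hset t ht, enc_range s some (Option.some_injective _)] at h2
      exact absurd h2 (by simp)
    · -- t ≤ n via framework 2
      by_contra htn
      push_neg at htn  -- n < t
      set X2 : Set (Option (Fin s ⊕ Fin s × Fin n)) :=
        Set.range (fun p : Fin s × Fin n => some (Sum.inr p)) with hX2
      have key := h _ (r2 s n) X2
      -- counter-attackers of attacker i
      have hca : ∀ i : Fin s, {z ∈ X2 | r2 s n z (some (Sum.inl i))} =
          Set.range (fun j : Fin n => some (Sum.inr (i, j))) := by
        intro i
        ext z
        simp only [Set.mem_setOf_eq, Set.mem_range, hX2]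
        constructor
        · rintro ⟨⟨p, rfl⟩, hr⟩
          simp only [r2] at hr
          exact ⟨p.2, by rw [← hr]⟩
        · rintro ⟨j, rfl⟩
          exact ⟨⟨(i, j), rfl⟩, rfl⟩
      have hcan : ∀ i : Fin s,
          ({z ∈ X2 | r2 s n z (some (Sum.inl i))}).encard = (n : ℕ∞) := by
        intro i
        rw [hca i]
        exact enc_range n _ (fun a b hab => by
          simpa using hab)
      -- attackers of none
      have hattack : ∀ y : Option (Fin s ⊕ Fin s × Fin n),
          r2 s n y none ↔ ∃ i : Fin s, y = some (Sum.inl i) := by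
        intro y
        match y with
        | none => simp [r2]
        | some (Sum.inl i) => simp [r2]
        | some (Sum.inr p) => simp [r2]
      have h1 : (none : Option (Fin s ⊕ Fin s × Fin n)) ∈ grDef (r2 s n) m n X2 := by
        simp only [grDef, Set.mem_setOf_eq]
        have : {y | r2 s n y none ∧ ({z ∈ X2 | r2 s n z y}).encard < (n : ℕ∞)} = ∅ := by
          ext y
          simp only [Set.mem_setOf_eq, Set.mem_empty_iff_false, iff_false, not_and]
          intro hy
          obtain ⟨i, rfl⟩ := (hattack y).mp hy
          rw [hcan i]
          exact lt_irrefl _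
        rw [this, Set.encard_empty]
        exact_mod_cast hm
      have h2 := key h1
      simp only [grDef, Set.mem_setOf_eq] at h2
      have hset : {y | r2 s n y none ∧ ({z ∈ X2 | r2 s n z y}).encard < (t : ℕ∞)} =
          Set.range (fun i : Fin s => some (Sum.inl i)) := by
        ext y
        simp only [Set.mem_setOf_eq, Set.mem_range]
        constructor
        · rintro ⟨hy, -⟩
          obtain ⟨i, rfl⟩ := (hattack y).mp hy
          exact ⟨i, rfl⟩
        · rintro ⟨i, rfl⟩
          refine ⟨(hattack _).mpr ⟨i, rfl⟩, ?_⟩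
          rw [hcan i]
          exact_mod_cast htn
      rw [hset, enc_range s _ (fun a b hab => by simpa using hab)] at h2
      exact absurd h2 (by simp)
  · rintro ⟨hms, htn⟩ A r X x hx
    simp only [grDef, Set.mem_setOf_eq] at hx ⊢
    refine lt_of_le_of_lt (Set.encard_mono ?_) (lt_of_lt_of_le hx (by exact_mod_cast hms))
    rintro y ⟨hy1, hy2⟩
    exact ⟨hy1, lt_of_lt_of_le hy2 (by exact_mod_cast htn)⟩
end

section
/- In a finitary argumentation framework, the graded defense function d_{m,n} is upward continuous: for any directed family D of subsets of A, d_{m,n}(⋃_{X ∈ D} X) = ⋃_{X ∈ D} d_{m,n}(X). -/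
variable {A : Type*}

lemma grDef_mono (r : A → A → Prop) (m n : ℕ) {X Y : Set A} (h : X ⊆ Y) :
    grDef r m n X ⊆ grDef r m n Y := by
  intro x hx
  refine lt_of_le_of_lt (Set.encard_mono ?_) hx
  rintro y ⟨hry, hlt⟩
  have hsub : {z | z ∈ X ∧ r z y} ⊆ {z | z ∈ Y ∧ r z y} := fun z hz => ⟨h hz.1, hz.2⟩
  exact ⟨hry, lt_of_le_of_lt (Set.encard_mono hsub) hlt⟩

lemma directed_finite (D : Set (Set A)) (hne : D.Nonempty)
    (hdir : ∀ X ∈ D, ∀ Y ∈ D, ∃ Z ∈ D, X ⊆ Z ∧ Y ⊆ Z)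
    {F : Set A} (hF : F.Finite) (hsub : F ⊆ ⋃ X ∈ D, X) :
    ∃ Z ∈ D, F ⊆ Z := by
  revert hsub
  refine Set.Finite.induction_on (motive := fun F _ => F ⊆ (⋃ X ∈ D, X) → ∃ Z ∈ D, F ⊆ Z) F hF ?_ ?_
  · exact fun _ => ⟨hne.choose, hne.choose_spec, by simp⟩
  · rintro a s ha hs ih hsub
    obtain ⟨Z, hZ, hsZ⟩ := ih (fun x hx => hsub (Set.mem_insert_of_mem a hx))
    obtain ⟨W, hW, haW⟩ := by
      have := hsub (Set.mem_insert a s)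
      simpa using this
    obtain ⟨V, hV, hWV, hZV⟩ := hdir W hW Z hZ
    exact ⟨V, hV, Set.insert_subset (hWV haW) (hsZ.trans hZV)⟩

theorem grDef_upward_continuous (r : A → A → Prop) (hfin : Finitary r)
    (m n : ℕ) (hm : 0 < m) (hn : 0 < n)
    (D : Set (Set A)) (hne : D.Nonempty)
    (hdir : ∀ X ∈ D, ∀ Y ∈ D, ∃ Z ∈ D, X ⊆ Z ∧ Y ⊆ Z) :
    grDef r m n (⋃ X ∈ D, X) = ⋃ X ∈ D, grDef r m n X := by
  set U := ⋃ X ∈ D, X with hU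
  apply Set.Subset.antisymm
  · intro x hx
    -- B : attackers of x with at least n attackers in U
    set B := {y | r y x ∧ ¬ {z ∈ U | r z y}.encard < (n : ℕ∞)} with hB
    have hBfin : B.Finite := (hfin x).subset fun y hy => hy.1
    -- collect witnesses
    have hFfin : (⋃ y ∈ B, {z ∈ U | r z y}).Finite := by
      refine hBfin.biUnion fun y _ => ?_
      exact (hfin y).subset fun z hz => hz.2
    have hFsub : (⋃ y ∈ B, {z ∈ U | r z y}) ⊆ U := by
      intro z hz
      simp only [Set.mem_iUnion] at hz
      obtain ⟨y, _, hzU, _⟩ := hz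
      exact hzU
    obtain ⟨Z, hZD, hFZ⟩ := directed_finite D hne hdir hFfin hFsub
    refine Set.mem_biUnion hZD ?_
    refine lt_of_le_of_lt (Set.encard_mono ?_) hx
    rintro y ⟨hry, hlt⟩
    refine ⟨hry, ?_⟩
    by_contra hcon
    -- then y ∈ B, so all its U-attackers are in Z
    have hyB : y ∈ B := ⟨hry, hcon⟩
    have : {z ∈ U | r z y} ⊆ {z ∈ Z | r z y} := by
      intro z hz
      exact ⟨hFZ (Set.mem_biUnion hyB hz), hz.2⟩
    exact hcon (lt_of_le_of_lt (Set.encard_mono this) hlt)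
  · intro x hx
    simp only [Set.mem_iUnion] at hx
    obtain ⟨X, hXD, hxX⟩ := hx
    exact grDef_mono r m n (Set.subset_biUnion_of_mem hXD) hxX
end

section
/- (Graded fundamental lemma) Let Δ be a finitary argumentation framework, m, n positive integers with n ≥ m, and X ⊆ A with X ⊆ d_{m,n}(X) and X ⊆ n_m(X). Then for every natural number k, X ⊆ d_{m,n}^k(X) ⊆ n_m(d_{m,n}^k(X)) ⊆ n_m(X); in particular every iterate d_{m,n}^k(X) is m-conflict-free. -/
variable {A : Type*}

lemma grNeut_anti (r : A → A → Prop) (ℓ : ℕ) {X Y : Set A} (h : X ⊆ Y) :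
    grNeut r ℓ Y ⊆ grNeut r ℓ X := by
  intro x hx
  exact lt_of_le_of_lt (Set.encard_mono fun y hy => show y ∈ {y ∈ Y | r y x} from ⟨h hy.1, hy.2⟩) hx

lemma grDef_cf (r : A → A → Prop) {m n : ℕ} (hnm : m ≤ n) {X : Set A}
    (hcf : X ⊆ grNeut r m X) :
    grDef r m n X ⊆ grNeut r m (grDef r m n X) := by
  intro x hx
  refine lt_of_le_of_lt (Set.encard_mono ?_) hx
  rintro y ⟨hyD, hyx⟩
  refine ⟨hyx, ?_⟩
  have hmn : (m : ℕ∞) ≤ (n : ℕ∞) := by exact_mod_cast hnm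
  have h1 : {z ∈ X | r z y} ⊆ {z | r z y ∧ {w ∈ X | r w z}.encard < (n : ℕ∞)} := by
    rintro z ⟨hzX, hzy⟩
    exact ⟨hzy, lt_of_lt_of_le (hcf hzX) hmn⟩
  exact lt_of_le_of_lt (Set.encard_mono h1) (lt_of_lt_of_le hyD hmn)

theorem graded_fundamental_lemma (r : A → A → Prop) (hfin : Finitary r)
    (m n : ℕ) (hm : 0 < m) (hn : 0 < n) (hnm : m ≤ n)
    (X : Set A) (hdef : X ⊆ grDef r m n X) (hcf : X ⊆ grNeut r m X) (k : ℕ) :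
    X ⊆ (grDef r m n)^[k] X ∧
      (grDef r m n)^[k] X ⊆ grNeut r m ((grDef r m n)^[k] X) ∧
      grNeut r m ((grDef r m n)^[k] X) ⊆ grNeut r m X := by
  have main : ∀ k, X ⊆ (grDef r m n)^[k] X ∧
      (grDef r m n)^[k] X ⊆ grNeut r m ((grDef r m n)^[k] X) := by
    intro k
    induction k with
    | zero => exact ⟨subset_rfl, hcf⟩
    | succ k ih =>
      rw [Function.iterate_succ_apply']
      exact ⟨hdef.trans (grDef_mono r m n ih.1), grDef_cf r hnm ih.2⟩
  exact ⟨(main k).1, (main k).2, grNeut_anti r m (main k).1⟩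
end
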